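/- Let q be a prime power and consider the generalized quadrangle Q(4,q) of order (q,q) with a subquadrangle of order (q,1) (a hyperbolic quadric section with (q+1)² points and 2(q+1) lines) removed. The resulting structure has q³ + q² + q + 1 − (q+1)² = q³ − q points and q³ + q² + q + 1 − 2(q+1) = (q−1)(q+1)² lines; counting incidences shows every remaining line contains exactly one deleted point, so the incidence graph is a (q, q+1; 8)-bipartite biregular graph of order (2q+1)(q² − 1). -/

import Mathlib

/-- A finite generalized quadrangle of order `(s,t)`. -/
structure GenQuad (P L : Type*) (s t : ℕ) where
  inc : P → L → Prop
  line_pts : ∀ ℓ : L, {p : P | inc p ℓ}.ncard = s + 1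
  pt_lines : ∀ p : P, {ℓ : L | inc p ℓ}.ncard = t + 1
  unique_line : ∀ ⦃p q : P⦄ ⦃ℓ ℓ' : L⦄, p ≠ q → inc p ℓ → inc q ℓ →
    inc p ℓ' → inc q ℓ' → ℓ = ℓ'
  gq : ∀ (p : P) (ℓ : L), ¬ inc p ℓ →
    ∃! q : P, inc q ℓ ∧ q ≠ p ∧ ∃ ℓ' : L, inc p ℓ' ∧ inc q ℓ'

/-- The incidence graph of a point-line incidence relation `I`. -/
def incGraph {P L : Type*} (I : P → L → Prop) : SimpleGraph (P ⊕ L) where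
  Adj x y :=
    match x, y with
    | Sum.inl p, Sum.inr l => I p l
    | Sum.inr l, Sum.inl p => I p l
    | _, _ => False
  symm := ⟨by rintro (p | l) (p' | l') h <;> exact h⟩
  loopless := ⟨by rintro (p | l) h <;> exact h⟩

lemma arith1 {q : ℕ} (h : 1 ≤ q) : (q+1)*(q-1) = q^2 - 1 := by
  obtain ⟨k, rfl⟩ : ∃ k, q = k + 1 := ⟨q - 1, by omega⟩
  simp only [Nat.add_sub_cancel]
  have h1 : (k+1)^2 = k*k+2*k+1 := by ring
  have h2 : (k+1+1)*k = k*k+2*k := by ring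
  omega

lemma arith2 {q : ℕ} (h : 1 ≤ q) : q^2 - q = q*(q-1) := by
  obtain ⟨k, rfl⟩ : ∃ k, q = k + 1 := ⟨q - 1, by omega⟩
  simp only [Nat.add_sub_cancel]
  have h1 : (k+1)^2 = k*k+2*k+1 := by ring
  have h2 : (k+1)*k = k*k+k := by ring
  omega

lemma arith3 {q : ℕ} (h : 1 ≤ q) : (q+1)*(q-1)*q = q^3 - q := by
  obtain ⟨k, rfl⟩ : ∃ k, q = k + 1 := ⟨q - 1, by omega⟩
  simp only [Nat.add_sub_cancel]
  have h1 : (k+1)^3 = k*k*k+3*(k*k)+3*k+1 := by ring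
  have h2 : (k+1+1)*k*(k+1) = k*k*k+3*(k*k)+2*k := by ring
  omega

section DoubleCount

variable {P L : Type*} [Finite P] [Finite L] {q : ℕ} (G : GenQuad P L q q)

lemma GenQuad.no4 {p p' : P} {ℓ ℓ' : L} (hpp : p ≠ p') (hll : ℓ ≠ ℓ')
    (h1 : G.inc p ℓ) (h2 : G.inc p' ℓ) (h3 : G.inc p ℓ') (h4 : G.inc p' ℓ') : False :=
  hll (G.unique_line hpp h1 h2 h3 h4)

lemma GenQuad.no6 {p1 p2 p3 : P} {ℓ1 ℓ2 ℓ3 : L} (h12 : p1 ≠ p2) (h13 : p1 ≠ p3)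
    (h23 : p2 ≠ p3) (g12 : ℓ1 ≠ ℓ2) (_g13 : ℓ1 ≠ ℓ3) (g23 : ℓ2 ≠ ℓ3)
    (i11 : G.inc p1 ℓ1) (i21 : G.inc p2 ℓ1) (i22 : G.inc p2 ℓ2) (i32 : G.inc p3 ℓ2)
    (i33 : G.inc p3 ℓ3) (i13 : G.inc p1 ℓ3) : False := by
  have hn : ¬ G.inc p1 ℓ2 := fun h => G.no4 h12 g12 i11 i21 h i22
  obtain ⟨x, -, hu⟩ := G.gq p1 ℓ2 hn
  have e2 := hu p2 ⟨i22, h12.symm, ℓ1, i11, i21⟩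
  have e3 := hu p3 ⟨i32, h13.symm, ℓ3, i13, i33⟩
  exact h23 (e2.trans e3.symm)

/-- every line with two deleted points would be... main double counting:
every non-deleted line has exactly one deleted point. -/
lemma one_del (hq1 : 1 ≤ q) (hL : Nat.card L = q ^ 3 + q ^ 2 + q + 1)
    (Pd : Set P) (Ld : Set L)
    (hPd : Pd.ncard = (q + 1) ^ 2) (hLd : Ld.ncard = 2 * (q + 1))
    (hsub : ∀ ℓ ∈ Ld, ∀ p : P, G.inc p ℓ → p ∈ Pd)
    (hmeet : ∀ ℓ : L, ∃ p ∈ Pd, G.inc p ℓ) :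
    ∀ ℓ ∉ Ld, {p ∈ Pd | G.inc p ℓ}.ncard = 1 := by
  classical
  have := Fintype.ofFinite P
  have := Fintype.ofFinite L
  set N : L → ℕ := fun ℓ => (Pd.toFinset.filter (fun p => G.inc p ℓ)).card with hN
  have hNcard : ∀ ℓ : L, {p ∈ Pd | G.inc p ℓ}.ncard = N ℓ := by
    intro ℓ
    rw [Set.ncard_eq_toFinset_card']
    congr 1
    ext p
    simp [hN]
  -- double counting
  have hdc : ∑ ℓ : L, N ℓ = (q + 1) ^ 2 * (q + 1) := by
    have h1 : ∑ ℓ : L, N ℓ = ∑ p ∈ Pd.toFinset, (Finset.univ.filter (fun ℓ => G.inc p ℓ)).card := by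
      simp only [hN, Finset.card_filter]
      rw [Finset.sum_comm]
    rw [h1]
    have h2 : ∀ p : P, (Finset.univ.filter (fun ℓ => G.inc p ℓ)).card = q + 1 := by
      intro p
      have := G.pt_lines p
      rw [Set.ncard_eq_toFinset_card'] at this
      rw [← this]
      congr 1
      ext ℓ; simp
    rw [Finset.sum_congr rfl fun p _ => h2 p, Finset.sum_const, smul_eq_mul]
    rw [Set.ncard_eq_toFinset_card'] at hPd
    rw [hPd]
  -- split over deleted / remaining lines
  have hsplit : ∑ ℓ ∈ Finset.univ.filter (fun ℓ => ℓ ∈ Ld), N ℓ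
      + ∑ ℓ ∈ Finset.univ.filter (fun ℓ => ℓ ∉ Ld), N ℓ = (q + 1) ^ 2 * (q + 1) := by
    rw [← hdc, Finset.sum_filter_add_sum_filter_not]
  have hdel : ∑ ℓ ∈ Finset.univ.filter (fun ℓ => ℓ ∈ Ld), N ℓ = 2 * (q + 1) * (q + 1) := by
    have hLdF : Finset.univ.filter (fun ℓ => ℓ ∈ Ld) = Ld.toFinset := by
      ext ℓ; simp
    have h3 : ∀ ℓ ∈ Finset.univ.filter (fun ℓ => ℓ ∈ Ld), N ℓ = q + 1 := by
      intro ℓ hℓ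
      simp only [Finset.mem_filter] at hℓ
      have := G.line_pts ℓ
      rw [Set.ncard_eq_toFinset_card'] at this
      have hfe : Pd.toFinset.filter (fun p => G.inc p ℓ) = {p : P | G.inc p ℓ}.toFinset := by
        ext p
        simp only [Finset.mem_filter, Set.mem_toFinset, Set.mem_setOf_eq]
        exact ⟨fun h => h.2, fun h => ⟨hsub ℓ hℓ.2 p h, h⟩⟩
      rw [hN]
      simp only [hfe, this]
    rw [Finset.sum_congr rfl h3, Finset.sum_const, smul_eq_mul]
    rw [hLdF, ← Set.ncard_eq_toFinset_card', hLd]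
  have hRcard : (Finset.univ.filter (fun ℓ => ℓ ∉ Ld)).card = q ^ 3 + q ^ 2 + q + 1 - 2 * (q + 1) := by
    have hLdF : Finset.univ.filter (fun ℓ => ℓ ∈ Ld) = Ld.toFinset := by
      ext ℓ; simp
    have h4 : (Finset.univ.filter (fun ℓ => ℓ ∈ Ld)).card = 2 * (q + 1) := by
      rw [hLdF, ← Set.ncard_eq_toFinset_card', hLd]
    have h5 := Finset.card_filter_add_card_filter_not
      (s := (Finset.univ : Finset L)) (p := fun ℓ => ℓ ∈ Ld)
    rw [Finset.card_univ, ← Nat.card_eq_fintype_card, hL, h4] at h5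
    omega
  -- each remaining line has ≥ 1 deleted point, and the sum equals the count
  have hge : ∀ ℓ ∈ Finset.univ.filter (fun ℓ => ℓ ∉ Ld), 1 ≤ N ℓ := by
    intro ℓ _
    obtain ⟨p, hp, hinc⟩ := hmeet ℓ
    have hmem : p ∈ Pd.toFinset.filter (fun p => G.inc p ℓ) := by simp [hp, hinc]
    exact Finset.card_pos.2 ⟨p, hmem⟩
  have hsum : ∑ ℓ ∈ Finset.univ.filter (fun ℓ => ℓ ∉ Ld), N ℓ
      = (Finset.univ.filter (fun ℓ => ℓ ∉ Ld)).card := by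
    have hA : (q+1)^2*(q+1) = q^3+3*q^2+3*q+1 := by ring
    have hB : 2*(q+1)*(q+1) = 2*q^2+4*q+2 := by ring
    have hq2 : q + 1 ≤ q^2 + q^3 := by nlinarith
    omega
  have hone : ∀ ℓ ∈ Finset.univ.filter (fun ℓ => ℓ ∉ Ld), N ℓ = 1 := by
    by_contra hcon
    push_neg at hcon
    obtain ⟨ℓ0, hℓ0, hne⟩ := hcon
    have h2le : 2 ≤ N ℓ0 := by
      have := hge ℓ0 hℓ0; omega
    have : (Finset.univ.filter (fun ℓ => ℓ ∉ Ld)).card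
        < ∑ ℓ ∈ Finset.univ.filter (fun ℓ => ℓ ∉ Ld), N ℓ := by
      calc (Finset.univ.filter (fun ℓ => ℓ ∉ Ld)).card
          = ∑ _ℓ ∈ Finset.univ.filter (fun ℓ => ℓ ∉ Ld), 1 := by simp
        _ < ∑ ℓ ∈ Finset.univ.filter (fun ℓ => ℓ ∉ Ld), N ℓ :=
            Finset.sum_lt_sum hge ⟨ℓ0, hℓ0, by omega⟩
    omega
  intro ℓ hℓ
  rw [hNcard]
  exact hone ℓ (by simp [hℓ])


lemma rem_line (hq1 : 1 ≤ q) (hL : Nat.card L = q ^ 3 + q ^ 2 + q + 1)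
    (Pd : Set P) (Ld : Set L)
    (hPd : Pd.ncard = (q + 1) ^ 2) (hLd : Ld.ncard = 2 * (q + 1))
    (hsub : ∀ ℓ ∈ Ld, ∀ p : P, G.inc p ℓ → p ∈ Pd)
    (hmeet : ∀ ℓ : L, ∃ p ∈ Pd, G.inc p ℓ) :
    ∀ ℓ ∉ Ld, {p : P | p ∉ Pd ∧ G.inc p ℓ}.ncard = q := by
  intro ℓ hℓ
  have h1 := one_del G hq1 hL Pd Ld hPd hLd hsub hmeet ℓ hℓ
  have h2 := G.line_pts ℓ
  have hun : {p : P | p ∈ Pd ∧ G.inc p ℓ} ∪ {p : P | p ∉ Pd ∧ G.inc p ℓ}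
      = {p : P | G.inc p ℓ} := by
    ext p; by_cases hp : p ∈ Pd <;> simp [hp]
  have hdisj : Disjoint {p : P | p ∈ Pd ∧ G.inc p ℓ} {p : P | p ∉ Pd ∧ G.inc p ℓ} := by
    rw [Set.disjoint_left]; rintro p ⟨h, -⟩ ⟨h', -⟩; exact h' h
  have := Set.ncard_union_eq hdisj (Set.toFinite _) (Set.toFinite _)
  rw [hun, h2, h1] at this
  omega

/-- a line through a remaining point is remaining -/
lemma rem_line_of_rem_pt (Pd : Set P) (Ld : Set L)
    (hsub : ∀ ℓ ∈ Ld, ∀ p : P, G.inc p ℓ → p ∈ Pd)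
    {p : P} {ℓ : L} (hp : p ∉ Pd) (h : G.inc p ℓ) : ℓ ∉ Ld :=
  fun hℓ => hp (hsub ℓ hℓ p h)

/-- the number of remaining points collinear with (and distinct from) a given
remaining point is `(q+1)*(q-1)`. -/
lemma nbr_count (hq1 : 1 ≤ q) (hL : Nat.card L = q ^ 3 + q ^ 2 + q + 1)
    (Pd : Set P) (Ld : Set L)
    (hPd : Pd.ncard = (q + 1) ^ 2) (hLd : Ld.ncard = 2 * (q + 1))
    (hsub : ∀ ℓ ∈ Ld, ∀ p : P, G.inc p ℓ → p ∈ Pd)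
    (hmeet : ∀ ℓ : L, ∃ p ∈ Pd, G.inc p ℓ)
    (x : P) (hx : x ∉ Pd) :
    {a : P | a ∉ Pd ∧ a ≠ x ∧ ∃ m : L, G.inc x m ∧ G.inc a m}.ncard = (q+1)*(q-1) := by
  classical
  have := Fintype.ofFinite P
  have := Fintype.ofFinite L
  set Lx : Finset L := Finset.univ.filter (fun m => G.inc x m) with hLx
  have hLxcard : Lx.card = q + 1 := by
    have := G.pt_lines x
    rw [Set.ncard_eq_toFinset_card'] at this
    rw [← this, hLx]
    congr 1
    ext m; simp
  set f : L → Finset P :=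
    fun m => (Finset.univ.filter (fun a => a ∉ Pd ∧ G.inc a m)).erase x with hf
  have hfcard : ∀ m ∈ Lx, (f m).card = q - 1 := by
    intro m hm
    simp only [hLx, Finset.mem_filter] at hm
    have hml : m ∉ Ld := rem_line_of_rem_pt G Pd Ld hsub hx hm.2
    have h1 := rem_line G hq1 hL Pd Ld hPd hLd hsub hmeet m hml
    rw [Set.ncard_eq_toFinset_card'] at h1
    have hx' : x ∈ Finset.univ.filter (fun a => a ∉ Pd ∧ G.inc a m) := by
      simp [hx, hm.2]
    rw [hf]
    rw [Finset.card_erase_of_mem hx']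
    have : (Finset.univ.filter (fun a => a ∉ Pd ∧ G.inc a m))
        = {p : P | p ∉ Pd ∧ G.inc p m}.toFinset := by
      ext p; simp
    rw [this, h1]
  have hdisj : ∀ m ∈ (Lx : Finset L), ∀ m' ∈ Lx, m ≠ m' → Disjoint (f m) (f m') := by
    intro m hm m' hm' hne
    simp only [hLx, Finset.mem_filter] at hm hm'
    rw [Finset.disjoint_left]
    intro a ha ha'
    simp only [hf, Finset.mem_erase, Finset.mem_filter] at ha ha'
    exact hne (G.unique_line ha.1 ha.2.2.2 hm.2 ha'.2.2.2 hm'.2)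
  have hbu : (Lx.biUnion f).card = (q+1) * (q-1) := by
    rw [Finset.card_biUnion hdisj]
    rw [Finset.sum_congr rfl hfcard, Finset.sum_const, smul_eq_mul, hLxcard]
  rw [Set.ncard_eq_toFinset_card']
  rw [← hbu]
  congr 1
  ext a
  simp only [Set.mem_toFinset, Set.mem_setOf_eq, Finset.mem_biUnion, hLx, hf,
    Finset.mem_filter, Finset.mem_erase, Finset.mem_univ, true_and]
  constructor
  · rintro ⟨ha, hax, m, hxm, ham⟩
    exact ⟨m, hxm, hax, ha, ham⟩
  · rintro ⟨m, hxm, hax, ha, ham⟩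
    exact ⟨ha, hax, m, hxm, ham⟩

/-- key gq consequence: a point one step beyond a neighbour, off the joining line,
is not collinear with the base point. -/
lemma not_col_of_step {p1 a z : P} {l : L} (hpa : a ≠ p1) (haz : z ≠ a)
    (hp1l : G.inc p1 l) (hal : G.inc a l) (hzl : ¬ G.inc z l)
    (hcol : ∃ m : L, G.inc a m ∧ G.inc z m) :
    z ≠ p1 ∧ ¬ ∃ n : L, G.inc p1 n ∧ G.inc z n := by
  obtain ⟨m, ham, hzm⟩ := hcol
  have hzp1 : z ≠ p1 := fun h => hzl (h ▸ hp1l)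
  refine ⟨hzp1, ?_⟩
  rintro ⟨n, hp1n, hzn⟩
  have hp1m : ¬ G.inc p1 m := by
    intro h
    have : m = l := G.unique_line hpa ham h hal hp1l
    exact hzl (this ▸ hzm)
  obtain ⟨y, -, hu⟩ := G.gq p1 m hp1m
  have e1 := hu a ⟨ham, hpa, l, hp1l, hal⟩
  have e2 := hu z ⟨hzm, hzp1, n, hp1n, hzn⟩
  exact haz (e2.trans e1.symm)


lemma exists_config (hq : 2 ≤ q)
    (hP : Nat.card P = q ^ 3 + q ^ 2 + q + 1) (hL : Nat.card L = q ^ 3 + q ^ 2 + q + 1)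
    (Pd : Set P) (Ld : Set L)
    (hPd : Pd.ncard = (q + 1) ^ 2) (hLd : Ld.ncard = 2 * (q + 1))
    (hsub : ∀ ℓ ∈ Ld, ∀ p : P, G.inc p ℓ → p ∈ Pd)
    (hmeet : ∀ ℓ : L, ∃ p ∈ Pd, G.inc p ℓ) :
    ∃ (p1 a z b : P) (l1 l2 l3 l4 : L),
      p1 ∉ Pd ∧ a ∉ Pd ∧ z ∉ Pd ∧ b ∉ Pd ∧
      l1 ∉ Ld ∧ l2 ∉ Ld ∧ l3 ∉ Ld ∧ l4 ∉ Ld ∧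
      p1 ≠ a ∧ p1 ≠ z ∧ p1 ≠ b ∧ a ≠ z ∧ a ≠ b ∧ z ≠ b ∧
      l1 ≠ l2 ∧ l1 ≠ l3 ∧ l1 ≠ l4 ∧ l2 ≠ l3 ∧ l2 ≠ l4 ∧ l3 ≠ l4 ∧
      G.inc p1 l1 ∧ G.inc a l1 ∧ G.inc a l2 ∧ G.inc z l2 ∧
      G.inc z l3 ∧ G.inc b l3 ∧ G.inc b l4 ∧ G.inc p1 l4 := by
  classical
  have := Fintype.ofFinite P
  have := Fintype.ofFinite L
  have hq1 : 1 ≤ q := by omega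
  have hsq : (q+1)^2 = q^2 + 2*q + 1 := by ring
  have hq3 : q + q^2 ≤ q^3 := by nlinarith
  -- counting remaining points
  have hPdcard : (Finset.univ.filter (fun p : P => p ∈ Pd)).card = (q+1)^2 := by
    rw [← hPd, Set.ncard_eq_toFinset_card']
    congr 1
    ext p; simp
  have hPsplit := Finset.card_filter_add_card_filter_not
    (s := (Finset.univ : Finset P)) (p := fun p => p ∈ Pd)
  rw [Finset.card_univ, ← Nat.card_eq_fintype_card, hP, hPdcard] at hPsplit
  have hremcard : (Finset.univ.filter (fun p : P => p ∉ Pd)).card = q^3 - q := by omega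
  -- a remaining point
  have hqlt : q < q^3 := by nlinarith
  obtain ⟨p1, hp1mem⟩ : ∃ p1, p1 ∈ Finset.univ.filter (fun p : P => p ∉ Pd) := by
    apply Finset.card_pos.1
    omega
  have hp1 : p1 ∉ Pd := by simpa using hp1mem
  -- the set of remaining neighbours of p1
  set A : Finset P := Finset.univ.filter
    (fun a => a ∉ Pd ∧ a ≠ p1 ∧ ∃ m : L, G.inc p1 m ∧ G.inc a m) with hA
  have hAcard : A.card = (q+1)*(q-1) := by
    have := nbr_count G hq1 hL Pd Ld hPd hLd hsub hmeet p1 hp1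
    rw [Set.ncard_eq_toFinset_card'] at this
    rw [← this, hA]
    congr 1
    ext a; simp
  -- chosen joining lines
  have hnel : Nonempty L := by
    have : 0 < Nat.card L := by omega
    exact (Nat.card_pos_iff.1 this).1
  set line0 : P → L := fun a =>
    if h : ∃ m : L, G.inc p1 m ∧ G.inc a m then h.choose else Classical.arbitrary L
    with hline0
  have hline0_spec : ∀ a ∈ A, G.inc p1 (line0 a) ∧ G.inc a (line0 a) := by
    intro a ha
    simp only [hA, Finset.mem_filter] at ha
    obtain ⟨-, -, -, hex⟩ := ha
    simp only [hline0, dif_pos hex]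
    exact hex.choose_spec
  -- z-sets
  set zbig : P → Finset P := fun a => Finset.univ.filter
    (fun z => z ∉ Pd ∧ z ≠ a ∧ ∃ m : L, G.inc a m ∧ G.inc z m) with hzbig
  set zon : P → Finset P := fun a => Finset.univ.filter
    (fun z => z ∉ Pd ∧ z ≠ a ∧ G.inc z (line0 a)) with hzon
  set zset : P → Finset P := fun a => zbig a \ zon a with hzset
  have hzsub : ∀ a ∈ A, zon a ⊆ zbig a := by
    intro a ha z hz
    simp only [hzon, Finset.mem_filter] at hz
    simp only [hzbig, Finset.mem_filter]
    exact ⟨hz.1, hz.2.1, hz.2.2.1, line0 a, (hline0_spec a ha).2, hz.2.2.2⟩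
  have hAmem : ∀ a ∈ A, a ∉ Pd ∧ a ≠ p1 := by
    intro a ha
    simp only [hA, Finset.mem_filter] at ha
    exact ⟨ha.2.1, ha.2.2.1⟩
  -- cardinality of zset
  have hzsetcard : ∀ a ∈ A, (zset a).card = q^2 - q := by
    intro a ha
    have hrem := (hAmem a ha).1
    have hbigcard : (zbig a).card = (q+1)*(q-1) := by
      have := nbr_count G hq1 hL Pd Ld hPd hLd hsub hmeet a hrem
      rw [Set.ncard_eq_toFinset_card'] at this
      rw [← this, hzbig]
      congr 1
      ext z; simp
    have honcard : (zon a).card = q - 1 := by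
      have hl0 : line0 a ∉ Ld :=
        rem_line_of_rem_pt G Pd Ld hsub hrem (hline0_spec a ha).2
      have h1 := rem_line G hq1 hL Pd Ld hPd hLd hsub hmeet (line0 a) hl0
      rw [Set.ncard_eq_toFinset_card'] at h1
      have hzon' : zon a
          = ({p : P | p ∉ Pd ∧ G.inc p (line0 a)}.toFinset).erase a := by
        ext z
        simp only [hzon, Finset.mem_filter, Finset.mem_erase, Set.mem_toFinset,
          Set.mem_setOf_eq, Finset.mem_univ, true_and]
        tauto
      rw [hzon', Finset.card_erase_of_mem (by
        simp only [Set.mem_toFinset, Set.mem_setOf_eq]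
        exact ⟨hrem, (hline0_spec a ha).2⟩), h1]
    rw [hzset]
    rw [Finset.card_sdiff_of_subset (hzsub a ha), hbigcard, honcard]
    have e1 : (q+1)*(q-1) = q^2 - 1 := arith1 hq1
    have e2 : q ≤ q^2 := by nlinarith
    omega
  -- every z in a zset is a remaining point not collinear with p1
  have hzZ : ∀ a ∈ A, ∀ z ∈ zset a,
      z ∉ Pd ∧ z ≠ p1 ∧ ¬ ∃ n : L, G.inc p1 n ∧ G.inc z n := by
    intro a ha z hz
    rw [hzset, Finset.mem_sdiff] at hz
    obtain ⟨hzb, hzno⟩ := hz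
    simp only [hzbig, Finset.mem_filter] at hzb
    obtain ⟨-, hzPd, hza, hcol⟩ := hzb
    have hzl : ¬ G.inc z (line0 a) := by
      intro h
      exact hzno (by simp only [hzon, Finset.mem_filter]; exact ⟨Finset.mem_univ z, hzPd, hza, h⟩)
    have := not_col_of_step G (hAmem a ha).2 hza (hline0_spec a ha).1
      (hline0_spec a ha).2 hzl hcol
    exact ⟨hzPd, this.1, this.2⟩
  -- the set of candidates z
  set Z : Finset P := Finset.univ.filter
    (fun z => z ∉ Pd ∧ z ≠ p1 ∧ ¬ ∃ n : L, G.inc p1 n ∧ G.inc z n) with hZ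
  have hzsetZ : ∀ a ∈ A, zset a ⊆ Z := by
    intro a ha z hz
    simp only [hZ, Finset.mem_filter]
    exact ⟨Finset.mem_univ z, hzZ a ha z hz⟩
  have hZcard : Z.card + ((q+1)*(q-1) + 1) ≤ q^3 - q := by
    have hsubZ : Z ∪ insert p1 A ⊆ Finset.univ.filter (fun p : P => p ∉ Pd) := by
      intro x hx
      simp only [Finset.mem_union, Finset.mem_insert, hZ, Finset.mem_filter] at hx ⊢
      rcases hx with h | h | h
      · exact ⟨Finset.mem_univ x, h.2.1⟩
      · exact ⟨Finset.mem_univ x, h ▸ hp1⟩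
      · exact ⟨Finset.mem_univ x, (hAmem x h).1⟩
    have hdisj : Disjoint Z (insert p1 A) := by
      rw [Finset.disjoint_left]
      intro x hx hx'
      simp only [hZ, Finset.mem_filter] at hx
      rcases Finset.mem_insert.1 hx' with h | h
      · exact hx.2.2.1 h
      · simp only [hA, Finset.mem_filter] at h
        exact hx.2.2.2 h.2.2.2
    have hins : (insert p1 A).card = (q+1)*(q-1) + 1 := by
      rw [Finset.card_insert_of_notMem (fun h => (hAmem p1 h).2 rfl), hAcard]
    have := Finset.card_le_card hsubZ
    rw [Finset.card_union_of_disjoint hdisj, hins, hremcard] at this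
    omega
  -- double counting paths of length two from p1
  by_cases hfib : ∀ z ∈ Z, (A.filter (fun a => z ∈ zset a)).card ≤ 1
  · exfalso
    have hsum1 : ∑ a ∈ A, (zset a).card = ∑ z ∈ Z, (A.filter (fun a => z ∈ zset a)).card := by
      have : ∀ a ∈ A, (zset a).card = ∑ z ∈ Z, if z ∈ zset a then 1 else 0 := by
        intro a ha
        rw [← Finset.card_filter]
        congr 1
        rw [Finset.filter_mem_eq_inter, Finset.inter_eq_right.2 (hzsetZ a ha)]
      rw [Finset.sum_congr rfl this, Finset.sum_comm]
      apply Finset.sum_congr rfl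
      intro z _
      rw [← Finset.card_filter]
    have hle : ∑ a ∈ A, (zset a).card ≤ Z.card := by
      rw [hsum1]
      calc ∑ z ∈ Z, (A.filter (fun a => z ∈ zset a)).card ≤ ∑ _z ∈ Z, 1 :=
            Finset.sum_le_sum hfib
        _ = Z.card := by simp
    have heq : ∑ a ∈ A, (zset a).card = (q+1)*(q-1) * (q^2 - q) := by
      rw [Finset.sum_congr rfl hzsetcard, Finset.sum_const, smul_eq_mul, hAcard]
    -- numerical contradiction
    rw [heq] at hle
    have e3 : q^2 - q = q * (q-1) := arith2 hq1
    have e4 : (q+1)*(q-1)*(q*(q-1)) ≥ (q+1)*(q-1)*q := by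
      have : q ≤ q*(q-1) := Nat.le_mul_of_pos_right q (by omega)
      exact Nat.mul_le_mul_left _ this
    have e5 : (q+1)*(q-1)*q = q^3 - q := arith3 hq1
    rw [e3] at hle
    omega
  · push_neg at hfib
    obtain ⟨z, hzZmem, hfib2⟩ := hfib
    obtain ⟨a, ha, b, hb, hab⟩ := Finset.one_lt_card.1 hfib2
    simp only [Finset.mem_filter] at ha hb
    obtain ⟨haA, hza⟩ := ha
    obtain ⟨hbA, hzb⟩ := hb
    simp only [hZ, Finset.mem_filter] at hzZmem
    obtain ⟨-, hzPd, hzp1, hnc⟩ := hzZmem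
    obtain ⟨haPd, hap1⟩ := hAmem a haA
    obtain ⟨hbPd, hbp1⟩ := hAmem b hbA
    obtain ⟨hp1l1, hal1⟩ := hline0_spec a haA
    obtain ⟨hp1l4, hbl4⟩ := hline0_spec b hbA
    have hza' := hza
    rw [hzset, Finset.mem_sdiff] at hza' hzb
    have hzbiga := hza'.1
    have hzbigb := hzb.1
    simp only [hzbig, Finset.mem_filter] at hzbiga hzbigb
    obtain ⟨-, -, hzab, l2, hal2, hzl2⟩ := hzbiga
    obtain ⟨-, -, hzbb, l3, hbl3, hzl3⟩ := hzbigb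
    refine ⟨p1, a, z, b, line0 a, l2, l3, line0 b, hp1, haPd, hzPd, hbPd,
      rem_line_of_rem_pt G Pd Ld hsub hp1 hp1l1,
      rem_line_of_rem_pt G Pd Ld hsub haPd hal2,
      rem_line_of_rem_pt G Pd Ld hsub hbPd hbl3,
      rem_line_of_rem_pt G Pd Ld hsub hp1 hp1l4,
      hap1.symm, hzp1.symm, hbp1.symm, hzab.symm, hab, hzbb.symm.symm, ?_, ?_, ?_, ?_, ?_, ?_,
      hp1l1, hal1, hal2, hzl2, hzl3, hbl3, hbl4, hp1l4⟩
    · intro h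
      exact hnc ⟨line0 a, hp1l1, by rw [h]; exact hzl2⟩
    · intro h
      exact hnc ⟨line0 a, hp1l1, by rw [h]; exact hzl3⟩
    · intro h
      have hnz : ¬ G.inc z (line0 a) := fun hh => hnc ⟨line0 a, hp1l1, hh⟩
      obtain ⟨y, -, hu⟩ := G.gq z (line0 a) hnz
      have e1 := hu a ⟨hal1, hzab.symm, l2, hzl2, hal2⟩
      have e2 := hu b ⟨by rw [h]; exact hbl4, hzbb.symm, l3, hzl3, hbl3⟩
      exact hab (e1.trans e2.symm)
    · intro h
      have hnp : ¬ G.inc p1 l2 := fun hh => hnc ⟨l2, hh, hzl2⟩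
      obtain ⟨y, -, hu⟩ := G.gq p1 l2 hnp
      have e1 := hu a ⟨hal2, hap1, line0 a, hp1l1, hal1⟩
      have e2 := hu b ⟨by rw [h]; exact hbl3, hbp1, line0 b, hp1l4, hbl4⟩
      exact hab (e1.trans e2.symm)
    · intro h
      exact hnc ⟨line0 b, hp1l4, by rw [← h]; exact hzl2⟩
    · intro h
      exact hnc ⟨line0 b, hp1l4, by rw [← h]; exact hzl3⟩

end DoubleCount


section Graph

variable {V W : Type*} (I : V → W → Prop)

lemma incGraph_adj_flip : ∀ {x y : V ⊕ W}, (incGraph I).Adj x y → x.isLeft = !y.isLeft := by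
  rintro (p | l) (p' | l') h
  · exact h.elim
  · simp
  · simp
  · exact h.elim

lemma incGraph_parity : ∀ {x y : V ⊕ W} (w : (incGraph I).Walk x y),
    Even w.length ↔ (x.isLeft = y.isLeft) := by
  intro x y w
  induction w with
  | nil => simp
  | @cons a b c h w ih =>
    have hab := incGraph_adj_flip I h
    rw [SimpleGraph.Walk.length_cons, Nat.even_add_one, ih, hab]
    cases b.isLeft <;> cases c.isLeft <;> simp

lemma no_cycle4
    (h4 : ∀ p p' l l', p ≠ p' → l ≠ l' → I p l → I p' l → I p l' → I p' l' → False)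
    {x0 x1 x2 x3 : V ⊕ W} (a1 : (incGraph I).Adj x0 x1) (a2 : (incGraph I).Adj x1 x2)
    (a3 : (incGraph I).Adj x2 x3) (a4 : (incGraph I).Adj x3 x0)
    (n02 : x0 ≠ x2) (n13 : x1 ≠ x3) : False := by
  rcases x0 with p | l
  · rcases x1 with p' | l1
    · exact a1.elim
    · rcases x2 with p2 | l2
      · rcases x3 with p3 | l3
        · exact a3.elim
        · exact h4 p p2 l1 l3 (by simpa using n02) (by simpa using n13) a1 a2 a4 a3
      · exact a2.elim
  · rcases x1 with p1 | l'
    · rcases x2 with p2 | l2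
      · exact a2.elim
      · rcases x3 with p3 | l3
        · exact h4 p1 p3 l l2 (by simpa using n13) (by simpa using n02) a1 a4 a2 a3
        · exact a3.elim
    · exact a1.elim

lemma no_cycle6
    (h6 : ∀ p1 p2 p3 l1 l2 l3, p1 ≠ p2 → p1 ≠ p3 → p2 ≠ p3 → l1 ≠ l2 → l1 ≠ l3 → l2 ≠ l3 →
      I p1 l1 → I p2 l1 → I p2 l2 → I p3 l2 → I p3 l3 → I p1 l3 → False)
    {x0 x1 x2 x3 x4 x5 : V ⊕ W}
    (a1 : (incGraph I).Adj x0 x1) (a2 : (incGraph I).Adj x1 x2)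
    (a3 : (incGraph I).Adj x2 x3) (a4 : (incGraph I).Adj x3 x4)
    (a5 : (incGraph I).Adj x4 x5) (a6 : (incGraph I).Adj x5 x0)
    (n02 : x0 ≠ x2) (n04 : x0 ≠ x4) (n24 : x2 ≠ x4)
    (n13 : x1 ≠ x3) (n15 : x1 ≠ x5) (n35 : x3 ≠ x5) : False := by
  rcases x0 with p1 | l1
  · rcases x1 with p' | l1'
    · exact a1.elim
    · rcases x2 with p2 | l2'
      · rcases x3 with p3' | l2
        · exact a3.elim
        · rcases x4 with p3 | l3'
          · rcases x5 with p5' | l3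
            · exact a5.elim
            · exact h6 p1 p2 p3 l1' l2 l3 (by simpa using n02) (by simpa using n04)
                (by simpa using n24) (by simpa using n13) (by simpa using n15)
                (by simpa using n35) a1 a2 a3 a4 a5 a6
          · exact a4.elim
      · exact a2.elim
  · rcases x1 with p1 | l'
    · rcases x2 with p2' | l2
      · exact a2.elim
      · rcases x3 with p2 | l3'
        · rcases x4 with p4' | l3
          · exact a4.elim
          · rcases x5 with p3 | l5'
            · exact h6 p2 p1 p3 l2 l1 l3 (by simpa using n13.symm) (by simpa using n35)
                (by simpa using n15) (by simpa using n02.symm) (by simpa using n24)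
                (by simpa using n04) a3 a2 a1 a6 a5 a4
            · exact a5.elim
        · exact a3.elim
    · exact a1.elim

lemma incGraph_eight_le
    (h4 : ∀ p p' l l', p ≠ p' → l ≠ l' → I p l → I p' l → I p l' → I p' l' → False)
    (h6 : ∀ p1 p2 p3 l1 l2 l3, p1 ≠ p2 → p1 ≠ p3 → p2 ≠ p3 → l1 ≠ l2 → l1 ≠ l3 → l2 ≠ l3 →
      I p1 l1 → I p2 l1 → I p2 l2 → I p3 l2 → I p3 l3 → I p1 l3 → False) :
    ∀ (a : V ⊕ W) (w : (incGraph I).Walk a a), w.IsCycle → 8 ≤ w.length := by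
  intro a w hw
  by_contra hlt
  push_neg at hlt
  have h3 := hw.three_le_length
  have hev : Even w.length := (incGraph_parity I w).2 rfl
  have hl : w.length = 4 ∨ w.length = 6 := by
    rcases hev with ⟨k, hk⟩; omega
  rw [SimpleGraph.Walk.isCycle_def] at hw
  obtain ⟨-, -, hnd⟩ := hw
  rcases w with - | ⟨a1, w⟩
  · simp at hl
  rcases w with - | ⟨a2, w⟩
  · simp at hl
  rcases w with - | ⟨a3, w⟩
  · simp at hl
  rcases w with - | ⟨a4, w⟩
  · simp at hl
  rcases w with - | ⟨a5, w⟩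
  · -- length 4
    simp only [SimpleGraph.Walk.support_cons, SimpleGraph.Walk.support_nil, List.tail_cons,
      List.nodup_cons, List.mem_cons, List.mem_singleton, List.not_mem_nil, or_false,
      List.nodup_nil, and_true] at hnd
    push_neg at hnd
    obtain ⟨⟨h12, h13, h10⟩, ⟨h23, h20⟩, h30⟩ := hnd
    exact no_cycle4 I h4 a1 a2 a3 a4 (Ne.symm h20) h13
  rcases w with - | ⟨a6, w⟩
  · simp at hl
  rcases w with - | ⟨a7, w⟩
  · -- length 6
    simp only [SimpleGraph.Walk.support_cons, SimpleGraph.Walk.support_nil, List.tail_cons,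
      List.nodup_cons, List.mem_cons, List.mem_singleton, List.not_mem_nil, or_false,
      List.nodup_nil, and_true] at hnd
    push_neg at hnd
    obtain ⟨⟨h12, h13, h14, h15, h10⟩, ⟨h23, h24, h25, h20⟩, ⟨h34, h35, h30⟩, ⟨h45, h40⟩, h50⟩ := hnd
    exact no_cycle6 I h6 a1 a2 a3 a4 a5 a6 (Ne.symm h20) (Ne.symm h40) h24 h13 h15 h35
  · simp only [SimpleGraph.Walk.length_cons] at hl
    omega

lemma incGraph_egirth_le {p1 a z b : V} {l1 l2 l3 l4 : W}
    (hpa : p1 ≠ a) (hpz : p1 ≠ z) (hpb : p1 ≠ b) (haz : a ≠ z) (hab : a ≠ b) (hzb : z ≠ b)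
    (h12 : l1 ≠ l2) (h13 : l1 ≠ l3) (h14 : l1 ≠ l4) (h23 : l2 ≠ l3) (h24 : l2 ≠ l4)
    (h34 : l3 ≠ l4)
    (i1 : I p1 l1) (i2 : I a l1) (i3 : I a l2) (i4 : I z l2)
    (i5 : I z l3) (i6 : I b l3) (i7 : I b l4) (i8 : I p1 l4) :
    (incGraph I).egirth ≤ 8 := by
  let Γ := incGraph I
  have A1 : Γ.Adj (Sum.inl p1) (Sum.inr l1) := i1
  have A2 : Γ.Adj (Sum.inr l1) (Sum.inl a) := i2
  have A3 : Γ.Adj (Sum.inl a) (Sum.inr l2) := i3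
  have A4 : Γ.Adj (Sum.inr l2) (Sum.inl z) := i4
  have A5 : Γ.Adj (Sum.inl z) (Sum.inr l3) := i5
  have A6 : Γ.Adj (Sum.inr l3) (Sum.inl b) := i6
  have A7 : Γ.Adj (Sum.inl b) (Sum.inr l4) := i7
  have A8 : Γ.Adj (Sum.inr l4) (Sum.inl p1) := i8
  let wc : Γ.Walk (Sum.inl p1) (Sum.inl p1) :=
    .cons A1 (.cons A2 (.cons A3 (.cons A4 (.cons A5 (.cons A6 (.cons A7 (.cons A8 .nil)))))))
  have hcyc : wc.IsCycle := by
    rw [SimpleGraph.Walk.isCycle_def]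
    refine ⟨?_, by simp [wc], ?_⟩
    · rw [SimpleGraph.Walk.isTrail_def]
      simp only [wc, SimpleGraph.Walk.edges_cons, SimpleGraph.Walk.edges_nil,
        List.nodup_cons, List.mem_cons, List.not_mem_nil, or_false, List.nodup_nil, and_true,
        Sym2.eq, Sym2.rel_iff', Prod.mk.injEq, Prod.swap_prod_mk, not_or]
      refine ⟨⟨?_,?_,?_,?_,?_,?_,?_⟩,⟨?_,?_,?_,?_,?_,?_⟩,⟨?_,?_,?_,?_,?_⟩,
        ⟨?_,?_,?_,?_⟩,⟨?_,?_,?_⟩,⟨?_,?_⟩,?_⟩ <;> simp_all [eq_comm]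
    · simp only [wc, SimpleGraph.Walk.support_cons, SimpleGraph.Walk.support_nil,
        List.tail_cons, List.nodup_cons, List.mem_cons, List.not_mem_nil, or_false,
        List.nodup_nil, and_true]
      push_neg
      refine ⟨⟨?_,?_,?_,?_,?_,?_,?_⟩,⟨?_,?_,?_,?_,?_,?_⟩,⟨?_,?_,?_,?_,?_⟩,
        ⟨?_,?_,?_,?_⟩,⟨?_,?_,?_⟩,⟨?_,?_⟩,?_⟩ <;> simp_all [eq_comm]
  have hle : Γ.egirth ≤ (wc.length : ℕ∞) :=
    le_trans (le_trans (iInf_le _ (Sum.inl p1)) (iInf_le _ wc)) (iInf_le _ hcyc)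
  have hlen : wc.length = 8 := rfl
  rw [hlen] at hle
  exact_mod_cast hle

end Graph

/-- Removing a hyperbolic quadric hyperplane section (`(q+1)²` points and `2(q+1)` lines,
every deleted line having all its points deleted, every line meeting the section) from the
generalized quadrangle `Q(4,q)` of order `(q,q)` leaves `q³+q²+q+1−(q+1)² = q³−q` points and
`q³+q²+q+1−2(q+1) = (q−1)(q+1)²` lines; every remaining line contains exactly one deleted
point, and the incidence graph of the remaining structure is a `(q,q+1;8)`-bipartite
biregular graph of order `(2q+1)(q²−1)`. -/
theorem stmt13 {P L : Type*} [Finite P] [Finite L] (q : ℕ) (hq : IsPrimePow q)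
    (G : GenQuad P L q q)
    (hP : Nat.card P = q ^ 3 + q ^ 2 + q + 1) (hL : Nat.card L = q ^ 3 + q ^ 2 + q + 1)
    (Pd : Set P) (Ld : Set L)
    (hPd : Pd.ncard = (q + 1) ^ 2) (hLd : Ld.ncard = 2 * (q + 1))
    (hsub : ∀ ℓ ∈ Ld, ∀ p : P, G.inc p ℓ → p ∈ Pd)
    (hmeet : ∀ ℓ : L, ∃ p ∈ Pd, G.inc p ℓ) :
    (q ^ 3 + q ^ 2 + q + 1) - (q + 1) ^ 2 = q ^ 3 - q ∧
    (q ^ 3 + q ^ 2 + q + 1) - 2 * (q + 1) = (q - 1) * (q + 1) ^ 2 ∧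
    {p : P | p ∉ Pd}.ncard = q ^ 3 - q ∧
    {ℓ : L | ℓ ∉ Ld}.ncard = (q - 1) * (q + 1) ^ 2 ∧
    (∀ ℓ : L, ℓ ∉ Ld → {p ∈ Pd | G.inc p ℓ}.ncard = 1) ∧
    (let Γ := incGraph (fun (p : {p : P // p ∉ Pd}) (ℓ : {ℓ : L // ℓ ∉ Ld}) => G.inc p.1 ℓ.1)
     Γ.girth = 8 ∧
     (∀ p : {p : P // p ∉ Pd}, (Γ.neighborSet (Sum.inl p)).ncard = q + 1) ∧
     (∀ ℓ : {ℓ : L // ℓ ∉ Ld}, (Γ.neighborSet (Sum.inr ℓ)).ncard = q) ∧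
     Nat.card ({p : P // p ∉ Pd} ⊕ {ℓ : L // ℓ ∉ Ld}) = (2 * q + 1) * (q ^ 2 - 1)) := by
  have hq2 : 2 ≤ q := hq.two_le
  have hq1 : 1 ≤ q := by omega
  have hle1 : (q + 1) ^ 2 ≤ q ^ 3 + q ^ 2 + q + 1 := by nlinarith
  have hle2 : 2 * (q + 1) ≤ q ^ 3 + q ^ 2 + q + 1 := by nlinarith
  have hle3 : q ≤ q ^ 3 := by nlinarith
  have hle4 : 1 ≤ q ^ 2 := by nlinarith
  have c1 : (q ^ 3 + q ^ 2 + q + 1) - (q + 1) ^ 2 = q ^ 3 - q := by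
    zify [hle1, hle3]; ring
  have c2 : (q ^ 3 + q ^ 2 + q + 1) - 2 * (q + 1) = (q - 1) * (q + 1) ^ 2 := by
    zify [hle2, hq1]; ring
  have hPr : {p : P | p ∉ Pd}.ncard = q ^ 3 - q := by
    have h := Set.ncard_add_ncard_compl Pd
    rw [hPd, hP] at h
    have : Pdᶜ = {p : P | p ∉ Pd} := rfl
    rw [this] at h
    omega
  have hLr : {ℓ : L | ℓ ∉ Ld}.ncard = (q - 1) * (q + 1) ^ 2 := by
    have h := Set.ncard_add_ncard_compl Ld
    rw [hLd, hL] at h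
    have : Ldᶜ = {ℓ : L | ℓ ∉ Ld} := rfl
    rw [this] at h
    omega
  have honedel := one_del G hq1 hL Pd Ld hPd hLd hsub hmeet
  refine ⟨c1, c2, hPr, hLr, honedel, ?_, ?_, ?_, ?_⟩
  -- girth
  · set I : {p : P // p ∉ Pd} → {ℓ : L // ℓ ∉ Ld} → Prop :=
      fun p ℓ => G.inc p.1 ℓ.1 with hI
    have h4' : ∀ p p' l l', p ≠ p' → l ≠ l' → I p l → I p' l → I p l' → I p' l' → False := by
      intro p p' l l' hpp hll i1 i2 i3 i4
      exact G.no4 (fun h => hpp (Subtype.ext h)) (fun h => hll (Subtype.ext h)) i1 i2 i3 i4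
    have h6' : ∀ p1 p2 p3 l1 l2 l3, p1 ≠ p2 → p1 ≠ p3 → p2 ≠ p3 → l1 ≠ l2 → l1 ≠ l3 →
        l2 ≠ l3 → I p1 l1 → I p2 l1 → I p2 l2 → I p3 l2 → I p3 l3 → I p1 l3 → False := by
      intro p1 p2 p3 l1 l2 l3 a1 a2 a3 b1 b2 b3 i1 i2 i3 i4 i5 i6
      exact G.no6 (fun h => a1 (Subtype.ext h)) (fun h => a2 (Subtype.ext h))
        (fun h => a3 (Subtype.ext h)) (fun h => b1 (Subtype.ext h))
        (fun h => b2 (Subtype.ext h)) (fun h => b3 (Subtype.ext h)) i1 i2 i3 i4 i5 i6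
    have hge : 8 ≤ (incGraph I).egirth :=
      SimpleGraph.le_egirth.2 fun a w hw => by
        exact_mod_cast Nat.cast_le.2 (incGraph_eight_le I h4' h6' a w hw)
    obtain ⟨p1, a, z, b, l1, l2, l3, l4, hp1, ha, hz, hb, g1, g2, g3, g4,
      d1, d2, d3, d4, d5, d6, e1, e2, e3, e4, e5, e6, i1, i2, i3, i4, i5, i6, i7, i8⟩ :=
      exists_config G hq2 hP hL Pd Ld hPd hLd hsub hmeet
    have hle8 : (incGraph I).egirth ≤ 8 := by
      refine incGraph_egirth_le I
        (p1 := ⟨p1, hp1⟩) (a := ⟨a, ha⟩) (z := ⟨z, hz⟩) (b := ⟨b, hb⟩)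
        (l1 := ⟨l1, g1⟩) (l2 := ⟨l2, g2⟩) (l3 := ⟨l3, g3⟩) (l4 := ⟨l4, g4⟩)
        (fun h => d1 (congrArg Subtype.val h)) (fun h => d2 (congrArg Subtype.val h))
        (fun h => d3 (congrArg Subtype.val h)) (fun h => d4 (congrArg Subtype.val h))
        (fun h => d5 (congrArg Subtype.val h)) (fun h => d6 (congrArg Subtype.val h))
        (fun h => e1 (congrArg Subtype.val h)) (fun h => e2 (congrArg Subtype.val h))
        (fun h => e3 (congrArg Subtype.val h)) (fun h => e4 (congrArg Subtype.val h))
        (fun h => e5 (congrArg Subtype.val h)) (fun h => e6 (congrArg Subtype.val h))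
        i1 i2 i3 i4 i5 i6 i7 i8
    have hegirth : (incGraph I).egirth = 8 := le_antisymm hle8 hge
    rw [SimpleGraph.girth, hegirth]
    rfl
  -- point degrees
  · intro p
    set I : {p : P // p ∉ Pd} → {ℓ : L // ℓ ∉ Ld} → Prop :=
      fun p ℓ => G.inc p.1 ℓ.1 with hI
    have him : (incGraph I).neighborSet (Sum.inl p)
        = Sum.inr '' {l : {ℓ : L // ℓ ∉ Ld} | I p l} := by
      ext x
      rcases x with p' | l
      · constructor
        · intro h; exact h.elim
        · rintro ⟨l, -, hl⟩; exact (Sum.inr_ne_inl hl).elim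
      · constructor
        · intro h; exact ⟨l, h, rfl⟩
        · rintro ⟨l', hl', hll⟩
          obtain rfl : l' = l := by simpa using hll
          exact hl'
    rw [him, Set.ncard_image_of_injective _ Sum.inr_injective]
    have hval : Subtype.val '' {l : {ℓ : L // ℓ ∉ Ld} | I p l}
        = {ℓ : L | G.inc p.1 ℓ} := by
      ext ℓ
      simp only [Set.mem_image, Set.mem_setOf_eq, Subtype.exists, exists_and_right,
        exists_eq_right]
      constructor
      · rintro ⟨h1, h2⟩; exact h2
      · intro h
        exact ⟨rem_line_of_rem_pt G Pd Ld hsub p.2 h, h⟩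
    rw [← Set.ncard_image_of_injective _ Subtype.val_injective, hval]
    exact G.pt_lines p.1
  -- line degrees
  · intro ℓ
    set I : {p : P // p ∉ Pd} → {ℓ : L // ℓ ∉ Ld} → Prop :=
      fun p ℓ => G.inc p.1 ℓ.1 with hI
    have him : (incGraph I).neighborSet (Sum.inr ℓ)
        = Sum.inl '' {p : {p : P // p ∉ Pd} | I p ℓ} := by
      ext x
      rcases x with p | l'
      · constructor
        · intro h; exact ⟨p, h, rfl⟩
        · rintro ⟨p', hp', hpp⟩
          obtain rfl : p' = p := by simpa using hpp
          exact hp'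
      · constructor
        · intro h; exact h.elim
        · rintro ⟨p', -, hp⟩; exact (Sum.inl_ne_inr hp).elim
    rw [him, Set.ncard_image_of_injective _ Sum.inl_injective]
    have hval : Subtype.val '' {p : {p : P // p ∉ Pd} | I p ℓ}
        = {p : P | p ∉ Pd ∧ G.inc p ℓ.1} := by
      ext p
      simp only [Set.mem_image, Set.mem_setOf_eq, Subtype.exists, exists_and_right,
        exists_eq_right]
      tauto
    rw [← Set.ncard_image_of_injective _ Subtype.val_injective, hval]
    exact rem_line G hq1 hL Pd Ld hPd hLd hsub hmeet ℓ.1 ℓ.2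
  -- order
  · rw [Nat.card_sum]
    have h1 : Nat.card {p : P // p ∉ Pd} = {p : P | p ∉ Pd}.ncard :=
      (Nat.card_coe_set_eq {p : P | p ∉ Pd}).symm ▸ rfl
    have h2 : Nat.card {ℓ : L // ℓ ∉ Ld} = {ℓ : L | ℓ ∉ Ld}.ncard :=
      (Nat.card_coe_set_eq {ℓ : L | ℓ ∉ Ld}).symm ▸ rfl
    rw [h1, h2, hPr, hLr]
    zify [hle3, hq1, hle4]
    ring
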